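/- Let α₁, β₁, β₂, a₁ be real constants with a₁ ≠ 0, and let C₁, C₂, D₁, D₂ : ℝ → ℝ be differentiable functions. Define u(x,t) = C₁(t) + C₂(t)e^{−a₁x} and v(x,t) = D₁(t) + D₂(t)e^{−a₁x}. Then u and v satisfy the system ∂u/∂t = ∂/∂x(∂²u/∂x² + α₁ v ∂v/∂x) − 2α₁a₁² v² and ∂v/∂t = ∂²u/∂x² + β₁u + β₂v for all (x,t) ∈ ℝ² if and only if for all t ∈ ℝ: C₁'(t) = −2α₁a₁²D₁(t)², C₂'(t) = −a₁³C₂(t) − 3α₁a₁²D₁(t)D₂(t), D₁'(t) = β₁C₁(t) + β₂D₁(t), and D₂'(t) = (a₁² + β₁)C₂(t) + β₂D₂(t). -/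

import Mathlib

/-- `u(x, t) = C₁(t) + C₂(t) e^{−a₁ x}`. -/
noncomputable def uSep (a₁ : ℝ) (C₁ C₂ : ℝ → ℝ) (x t : ℝ) : ℝ :=
  C₁ t + C₂ t * Real.exp (-a₁ * x)

/-- `v(x, t) = D₁(t) + D₂(t) e^{−a₁ x}`. -/
noncomputable def vSep (a₁ : ℝ) (D₁ D₂ : ℝ → ℝ) (x t : ℝ) : ℝ :=
  D₁ t + D₂ t * Real.exp (-a₁ * x)

lemma hExpAux (a₁ x : ℝ) :
    HasDerivAt (fun y : ℝ => Real.exp (-a₁ * y)) (-a₁ * Real.exp (-a₁ * x)) x := by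
  have h : HasDerivAt (fun y : ℝ => -a₁ * y) (-a₁) x := by
    simpa using (hasDerivAt_id x).const_mul (-a₁)
  simpa [mul_comm] using h.exp

lemma dt_u (a₁ x t : ℝ) (C₁ C₂ : ℝ → ℝ) (hC₁ : Differentiable ℝ C₁)
    (hC₂ : Differentiable ℝ C₂) :
    deriv (fun s => uSep a₁ C₁ C₂ x s) t
      = deriv C₁ t + deriv C₂ t * Real.exp (-a₁ * x) := by
  unfold uSep
  exact (((hC₁ t).hasDerivAt).add (((hC₂ t).hasDerivAt).mul_const _)).deriv

lemma dx_v (a₁ x t : ℝ) (D₁ D₂ : ℝ → ℝ) :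
    deriv (fun z => vSep a₁ D₁ D₂ z t) x = -a₁ * D₂ t * Real.exp (-a₁ * x) := by
  unfold vSep
  have h := (((hExpAux a₁ x).const_mul (D₂ t)).const_add (D₁ t)).deriv
  rw [h]; ring

lemma ddx_u (a₁ x t : ℝ) (C₁ C₂ : ℝ → ℝ) :
    iteratedDeriv 2 (fun z => uSep a₁ C₁ C₂ z t) x
      = a₁ ^ 2 * C₂ t * Real.exp (-a₁ * x) := by
  unfold uSep
  rw [show (2:ℕ) = 1 + 1 from rfl, iteratedDeriv_succ, iteratedDeriv_one]
  have hd : deriv (fun z => C₁ t + C₂ t * Real.exp (-a₁ * z))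
      = fun z => (C₂ t * -a₁) * Real.exp (-a₁ * z) := by
    funext z
    have h := (((hExpAux a₁ z).const_mul (C₂ t)).const_add (C₁ t)).deriv
    rw [h]; ring
  rw [hd, ((hExpAux a₁ x).const_mul (C₂ t * -a₁)).deriv]; ring

lemma rhs1 (α₁ a₁ x t : ℝ) (C₁ C₂ D₁ D₂ : ℝ → ℝ) :
    deriv (fun y => iteratedDeriv 2 (fun z => uSep a₁ C₁ C₂ z t) y
        + α₁ * vSep a₁ D₁ D₂ y t * deriv (fun z => vSep a₁ D₁ D₂ z t) y) x
      - 2 * α₁ * a₁ ^ 2 * (vSep a₁ D₁ D₂ x t) ^ 2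
      = -2 * α₁ * a₁ ^ 2 * (D₁ t) ^ 2
        + (-a₁ ^ 3 * C₂ t - 3 * α₁ * a₁ ^ 2 * D₁ t * D₂ t) * Real.exp (-a₁ * x) := by
  have hfun : (fun y => iteratedDeriv 2 (fun z => uSep a₁ C₁ C₂ z t) y
        + α₁ * vSep a₁ D₁ D₂ y t * deriv (fun z => vSep a₁ D₁ D₂ z t) y)
      = fun y => a₁ ^ 2 * C₂ t * Real.exp (-a₁ * y)
        + α₁ * ((D₁ t + D₂ t * Real.exp (-a₁ * y))
            * (-a₁ * D₂ t * Real.exp (-a₁ * y))) := by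
    funext y
    rw [ddx_u, dx_v]
    simp [vSep]; ring
  rw [hfun]
  have h1 := (hExpAux a₁ x).const_mul (a₁ ^ 2 * C₂ t)
  have h2a := ((hExpAux a₁ x).const_mul (D₂ t)).const_add (D₁ t)
  have h2b := (hExpAux a₁ x).const_mul (-a₁ * D₂ t)
  have h := (show HasDerivAt (fun y => a₁ ^ 2 * C₂ t * Real.exp (-a₁ * y) + α₁ * ((D₁ t + D₂ t * Real.exp (-a₁ * y)) * (-a₁ * D₂ t * Real.exp (-a₁ * y)))) _ x from h1.add ((h2a.mul h2b).const_mul α₁)).deriv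
  rw [h]
  simp [vSep]; ring

lemma rhs2 (β₁ β₂ a₁ x t : ℝ) (C₁ C₂ D₁ D₂ : ℝ → ℝ) :
    iteratedDeriv 2 (fun z => uSep a₁ C₁ C₂ z t) x
        + β₁ * uSep a₁ C₁ C₂ x t + β₂ * vSep a₁ D₁ D₂ x t
      = (β₁ * C₁ t + β₂ * D₁ t)
        + ((a₁ ^ 2 + β₁) * C₂ t + β₂ * D₂ t) * Real.exp (-a₁ * x) := by
  rw [ddx_u]; simp [uSep, vSep]; ring

-- coefficient extraction
lemma coeff_extract (a₁ : ℝ) (ha₁ : a₁ ≠ 0) (A B P Q : ℝ)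
    (h : ∀ x : ℝ, A + B * Real.exp (-a₁ * x) = P + Q * Real.exp (-a₁ * x)) :
    A = P ∧ B = Q := by
  have k0 := h 0
  simp at k0
  have k1 := h (-1 / a₁)
  have hx : -a₁ * (-1 / a₁) = 1 := by field_simp
  rw [hx] at k1
  have he : Real.exp 1 ≠ 1 := by
    have := Real.add_one_le_exp (1 : ℝ)
    intro hcontra; rw [hcontra] at this; linarith
  have hBQ : (B - Q) * (Real.exp 1 - 1) = 0 := by linear_combination k1 - k0
  rcases mul_eq_zero.mp hBQ with h' | h'
  · have hB : B = Q := by linarith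
    exact ⟨by linarith, hB⟩
  · exact absurd (by linarith : Real.exp 1 = 1) he

/-- With `u(x,t) = C₁(t) + C₂(t) e^{−a₁ x}` and
`v(x,t) = D₁(t) + D₂(t) e^{−a₁ x}`, the pair `(u, v)` solves the system
`u_t = (u_{xx} + α₁ v v_x)_x − 2 α₁ a₁² v²`, `v_t = u_{xx} + β₁ u + β₂ v` if and only if
the coefficient functions solve the corresponding system of ODEs. -/
theorem separated_solution_iff_ODE_system
    (α₁ β₁ β₂ a₁ : ℝ) (ha₁ : a₁ ≠ 0)
    (C₁ C₂ D₁ D₂ : ℝ → ℝ)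
    (hC₁ : Differentiable ℝ C₁) (hC₂ : Differentiable ℝ C₂)
    (hD₁ : Differentiable ℝ D₁) (hD₂ : Differentiable ℝ D₂) :
    ((∀ x t : ℝ,
        deriv (fun s => uSep a₁ C₁ C₂ x s) t
          = deriv (fun y => iteratedDeriv 2 (fun z => uSep a₁ C₁ C₂ z t) y
              + α₁ * vSep a₁ D₁ D₂ y t * deriv (fun z => vSep a₁ D₁ D₂ z t) y) x
            - 2 * α₁ * a₁ ^ 2 * (vSep a₁ D₁ D₂ x t) ^ 2) ∧
      (∀ x t : ℝ,
        deriv (fun s => vSep a₁ D₁ D₂ x s) t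
          = iteratedDeriv 2 (fun z => uSep a₁ C₁ C₂ z t) x
            + β₁ * uSep a₁ C₁ C₂ x t + β₂ * vSep a₁ D₁ D₂ x t)) ↔
    (∀ t : ℝ,
      deriv C₁ t = -2 * α₁ * a₁ ^ 2 * (D₁ t) ^ 2 ∧
      deriv C₂ t = -a₁ ^ 3 * C₂ t - 3 * α₁ * a₁ ^ 2 * D₁ t * D₂ t ∧
      deriv D₁ t = β₁ * C₁ t + β₂ * D₁ t ∧
      deriv D₂ t = (a₁ ^ 2 + β₁) * C₂ t + β₂ * D₂ t) := by
  constructor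
  · rintro ⟨h1, h2⟩ t
    have key1 : ∀ x : ℝ,
        deriv C₁ t + deriv C₂ t * Real.exp (-a₁ * x)
          = -2 * α₁ * a₁ ^ 2 * (D₁ t) ^ 2
            + (-a₁ ^ 3 * C₂ t - 3 * α₁ * a₁ ^ 2 * D₁ t * D₂ t) * Real.exp (-a₁ * x) := by
      intro x
      rw [← dt_u a₁ x t C₁ C₂ hC₁ hC₂, ← rhs1 α₁ a₁ x t C₁ C₂ D₁ D₂]
      exact h1 x t
    have key2 : ∀ x : ℝ,
        deriv D₁ t + deriv D₂ t * Real.exp (-a₁ * x)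
          = (β₁ * C₁ t + β₂ * D₁ t)
            + ((a₁ ^ 2 + β₁) * C₂ t + β₂ * D₂ t) * Real.exp (-a₁ * x) := by
      intro x
      rw [← dt_u a₁ x t D₁ D₂ hD₁ hD₂, ← rhs2 β₁ β₂ a₁ x t C₁ C₂ D₁ D₂]
      exact h2 x t
    obtain ⟨e1, e2⟩ := coeff_extract a₁ ha₁ _ _ _ _ key1
    obtain ⟨e3, e4⟩ := coeff_extract a₁ ha₁ _ _ _ _ key2
    exact ⟨e1, e2, e3, e4⟩
  · intro h
    constructor
    · intro x t
      obtain ⟨e1, e2, _, _⟩ := h t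
      rw [dt_u a₁ x t C₁ C₂ hC₁ hC₂, rhs1 α₁ a₁ x t C₁ C₂ D₁ D₂, e1, e2]
    · intro x t
      obtain ⟨_, _, e3, e4⟩ := h t
      rw [show (fun s => vSep a₁ D₁ D₂ x s) = fun s => uSep a₁ D₁ D₂ x s from rfl,
        dt_u a₁ x t D₁ D₂ hD₁ hD₂, rhs2 β₁ β₂ a₁ x t C₁ C₂ D₁ D₂, e3, e4]
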